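/- Let M, N be natural numbers with 1 ≤ N ≤ M. Then 4N/3 is the greatest element of the set {s ∈ ℝ : ∃ (x,y) ∈ C_DoF(M,N), s = x + y}. (This is the case 2M ≥ 2N of the total DoF of the MIMO X-channel with asymmetric output feedback and delayed CSIT, Table I.) -/
import Mathlib


/-- Sum DoF region of the (M,M,N,N) MIMO X-channel with asymmetric output feedback
and delayed CSIT, without security constraints (Theorem 4). -/
noncomputable def CDoF (M N : ℕ) : Set (ℝ × ℝ) :=
  {p | 0 ≤ p.1 ∧ 0 ≤ p.2 ∧
    p.1 / min (2 * (M : ℝ)) (2 * (N : ℝ)) + p.2 / min (2 * (M : ℝ)) (N : ℝ) ≤ 1 ∧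
    p.1 / min (2 * (M : ℝ)) (N : ℝ) + p.2 / min (2 * (M : ℝ)) (2 * (N : ℝ)) ≤ 1}

/-- For 1 ≤ N ≤ M, the maximal sum x + y over C_DoF(M,N) equals 4N/3. -/
theorem total_dof_case_high (M N : ℕ) (hN : 1 ≤ N) (hNM : N ≤ M) :
    IsGreatest {s : ℝ | ∃ p ∈ CDoF M N, s = p.1 + p.2} (4 * (N : ℝ) / 3) := by
  have hn : (0:ℝ) < N := by exact_mod_cast hN
  have hm : (N:ℝ) ≤ M := by exact_mod_cast hNM
  have h1 : min (2*(M:ℝ)) (2*(N:ℝ)) = 2*(N:ℝ) := min_eq_right (by linarith)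
  have h2 : min (2*(M:ℝ)) ((N:ℝ)) = (N:ℝ) := min_eq_right (by linarith)
  constructor
  · refine ⟨(2*N/3, 2*N/3), ⟨by positivity, by positivity, ?_, ?_⟩, by ring⟩ <;>
    · simp only [h1, h2]
      rw [div_add_div _ _ (by positivity) (by positivity), div_le_one (by positivity)]
      ring_nf
      nlinarith [sq_nonneg ((N:ℝ))]
  · rintro s ⟨p, ⟨hx, hy, h3, h4⟩, rfl⟩
    rw [h1, h2, div_add_div _ _ (by positivity : (2*(N:ℝ)) ≠ 0) (by positivity : ((N:ℝ)) ≠ 0),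
      div_le_one (by positivity)] at h3
    rw [h1, h2, div_add_div _ _ (by positivity : ((N:ℝ)) ≠ 0) (by positivity : (2*(N:ℝ)) ≠ 0),
      div_le_one (by positivity)] at h4
    nlinarith [mul_pos hn hn]
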